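/- arXiv:1606.00648 — 4 statements merged into one kernel-verified Lean document; each statement's English description precedes it below -/
import Mathlib

section
/- Let d ∈ ℕ, α > 1/2 and weights 1 ≥ γ₁ ≥ γ₂ ≥ ⋯ > 0. For all x, y ∈ [0,1]^d, the shift-averaged tent-transformed cosine-space kernel satisfies ∫_{[0,1]^d} K_{d,α,γ}(ψ(x+Δ mod 1), ψ(y+Δ mod 1)) dΔ = Σ_{k ∈ ℤ^d} (2^{−|k|₀}/r_{α,γ}(k)) exp(2πi k·(x−y)) = K^per_{d,α,γ/2}(x, y); that is, it equals the Korobov kernel with the weights γ replaced by γ/2. -/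
open MeasureTheory Finset
open scoped Real

noncomputable section

/-- The unit cube `[0,1]^d`. -/
def cube (d : ℕ) : Set (Fin d → ℝ) := Set.Icc 0 1

/-- The tent transform `ψ(x) = 1 - |2x - 1|`. -/
def tent (x : ℝ) : ℝ := 1 - |2 * x - 1|

/-- Componentwise tent transform. -/
def tentVec {d : ℕ} (x : Fin d → ℝ) : Fin d → ℝ := fun j => tent (x j)

/-- Number of nonzero components of a vector. -/
def nnz {d : ℕ} {R : Type*} [Zero R] (k : Fin d → R) : ℕ :=
  Nat.card {j : Fin d // k j ≠ 0}

/-- Coercion of an `ℕ`-vector to a `ℤ`-vector. -/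
def intCoe {d : ℕ} (k : Fin d → ℕ) : Fin d → ℤ := fun j => (k j : ℤ)

/-- Half-period cosine basis function `φ_k`. -/
def phi {d : ℕ} (k : Fin d → ℕ) (x : Fin d → ℝ) : ℝ :=
  Real.sqrt 2 ^ nnz k * ∏ j, Real.cos (π * k j * x j)

/-- The weight `r_{α,γ}(k)`. -/
def rW {d : ℕ} (α : ℝ) (γ : ℕ → ℝ) (k : Fin d → ℤ) : ℝ :=
  ∏ j, if k j = 0 then 1 else |(k j : ℝ)| ^ (2 * α) / γ (j.1 + 1)

/-- `2 π i` as a complex number. -/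
def twoPiI : ℂ := 2 * (Real.pi : ℂ) * Complex.I

/-- Cosine coefficient `f̂(k)`. -/
def cosCoeff {d : ℕ} (f : (Fin d → ℝ) → ℂ) (k : Fin d → ℕ) : ℂ :=
  ∫ x in cube d, f x * (phi k x : ℂ)

/-- Squared norm in the weighted half-period cosine space. -/
def cosNormSq (d : ℕ) (α : ℝ) (γ : ℕ → ℝ) (f : (Fin d → ℝ) → ℂ) : ℝ :=
  ∑' k : Fin d → ℕ, ‖cosCoeff f k‖ ^ 2 * rW α γ (intCoe k)

/-- Membership in the weighted half-period cosine space `C_{d,α,γ}`. -/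
def memCos (d : ℕ) (α : ℝ) (γ : ℕ → ℝ) (f : (Fin d → ℝ) → ℂ) : Prop :=
  MemLp f 2 (volume.restrict (cube d)) ∧
    Summable fun k : Fin d → ℕ => ‖cosCoeff f k‖ ^ 2 * rW α γ (intCoe k)

/-- Fourier coefficient `f̃(h)`. -/
def fourCoeff {d : ℕ} (f : (Fin d → ℝ) → ℂ) (h : Fin d → ℤ) : ℂ :=
  ∫ x in cube d, f x * Complex.exp (-twoPiI * ∑ j, (h j : ℂ) * (x j : ℂ))

/-- Squared norm in the weighted Korobov space. -/
def korNormSq (d : ℕ) (α : ℝ) (γ : ℕ → ℝ) (f : (Fin d → ℝ) → ℂ) : ℝ :=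
  ∑' h : Fin d → ℤ, ‖fourCoeff f h‖ ^ 2 * rW α γ h

/-- Membership in the weighted Korobov space `E_{d,α,γ}`. -/
def memKor (d : ℕ) (α : ℝ) (γ : ℕ → ℝ) (f : (Fin d → ℝ) → ℂ) : Prop :=
  MemLp f 2 (volume.restrict (cube d)) ∧
    Summable fun h : Fin d → ℤ => ‖fourCoeff f h‖ ^ 2 * rW α γ h

/-- Worst-case integration error of a cubature rule in the cosine space. -/
def wceCos (d : ℕ) (α : ℝ) (γ : ℕ → ℝ) {n : ℕ} (pts : Fin n → Fin d → ℝ) (w : Fin n → ℝ) : ℝ :=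
  ⨆ f : {f : (Fin d → ℝ) → ℂ // memCos d α γ f ∧ cosNormSq d α γ f ≤ 1},
    ‖(∫ x in cube d, f.1 x) - ∑ i, (w i : ℂ) * f.1 (pts i)‖

/-- Worst-case integration error of a cubature rule in the Korobov space. -/
def wceKor (d : ℕ) (α : ℝ) (γ : ℕ → ℝ) {n : ℕ} (pts : Fin n → Fin d → ℝ) (w : Fin n → ℝ) : ℝ :=
  ⨆ f : {f : (Fin d → ℝ) → ℂ // memKor d α γ f ∧ korNormSq d α γ f ≤ 1},
    ‖(∫ x in cube d, f.1 x) - ∑ i, (w i : ℂ) * f.1 (pts i)‖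

/-- Rank-1 lattice point `(i z / n) mod 1`. -/
def latPt (d n : ℕ) (z : Fin d → ℕ) (i : ℕ) : Fin d → ℝ :=
  fun j => Int.fract ((i : ℝ) * z j / n)

/-- Shifted rank-1 lattice point `(i z / n + Δ) mod 1`. -/
def latPtSh (d n : ℕ) (z : Fin d → ℕ) (Δ : Fin d → ℝ) (i : ℕ) : Fin d → ℝ :=
  fun j => Int.fract ((i : ℝ) * z j / n + Δ j)

/-- Membership in the dual lattice: `h · z ≡ 0 (mod n)`. -/
def inDual (d n : ℕ) (z : Fin d → ℕ) (h : Fin d → ℤ) : Prop :=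
  (∑ j, h j * (z j : ℤ)) % (n : ℤ) = 0

instance (d n : ℕ) (z : Fin d → ℕ) (h : Fin d → ℤ) : Decidable (inDual d n z h) := by
  unfold inDual; infer_instance

/-- Application of signs `σ ∈ {±1}^d` to an integer vector. -/
def sigApp {d : ℕ} (σ : Fin d → Bool) (k : Fin d → ℤ) : Fin d → ℤ :=
  fun j => (if σ j then 1 else -1) * k j

/-- The Riemann zeta function `ζ(x) = Σ_{k≥1} k^{-x}` as a real series. -/
def realZeta (x : ℝ) : ℝ := ∑' k : ℕ, ((k : ℝ) + 1) ^ (-x)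

/-- Reproducing kernel of the cosine space. -/
def cosKernel (d : ℕ) (α : ℝ) (γ : ℕ → ℝ) (x y : Fin d → ℝ) : ℝ :=
  ∑' k : Fin d → ℕ, phi k x * phi k y / rW α γ (intCoe k)

/-- Reproducing kernel of the Korobov space. -/
def korKernel (d : ℕ) (α : ℝ) (γ : ℕ → ℝ) (x y : Fin d → ℝ) : ℂ :=
  ∑' h : Fin d → ℤ,
    Complex.exp (twoPiI * ∑ j, (h j : ℂ) * ((x j : ℂ) - (y j : ℂ))) / (rW α γ h : ℂ)

/-- Approximate cosine coefficient `f̂_a(k)` via tent-transformed lattice points. -/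
def approxCoeff (d n : ℕ) (z : Fin d → ℕ) (f : (Fin d → ℝ) → ℂ) (k : Fin d → ℕ) : ℂ :=
  (n : ℂ)⁻¹ * ∑ i ∈ Finset.Icc 1 n,
    f (tentVec (latPt d n z i)) * (phi k (tentVec (latPt d n z i)) : ℂ)

/-- The approximation algorithm `A_{n,d,M}`. -/
def approxAlg (d n : ℕ) (z : Fin d → ℕ) (α : ℝ) (γ : ℕ → ℝ) (M : ℝ)
    (f : (Fin d → ℝ) → ℂ) (x : Fin d → ℝ) : ℂ :=
  ∑' k : {k : Fin d → ℕ // rW α γ (intCoe k) ≤ M},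
    approxCoeff d n z f k.1 * (phi k.1 x : ℂ)

/-- The aliasing term in the error of the approximate cosine coefficient. -/
def aliasTerm (d n : ℕ) (z : Fin d → ℕ) (f : (Fin d → ℝ) → ℂ) (k : Fin d → ℕ) : ℂ :=
  ∑' h : {h : Fin d → ℤ // h ≠ 0 ∧ inDual d n z h}, ∑ σ : Fin d → Bool,
    cosCoeff f (fun j => (sigApp σ h.1 j + (k j : ℤ)).natAbs) *
      ((Real.sqrt 2 ^ (-(nnz (fun j => sigApp σ h.1 j + (k j : ℤ)) : ℤ) + (nnz k : ℤ)) / 2 ^ d : ℝ) : ℂ)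

/-- `L₂` approximation error of `A_{n,d,M}` for a given `f`. -/
def approxErr (d n : ℕ) (z : Fin d → ℕ) (α : ℝ) (γ : ℕ → ℝ) (M : ℝ)
    (f : (Fin d → ℝ) → ℂ) : ℝ :=
  Real.sqrt (∫ x in cube d, ‖f x - approxAlg d n z α γ M f x‖ ^ 2)

/-- Worst-case approximation error of `A_{n,d,M}` in the cosine space. -/
def wceApp (d n : ℕ) (z : Fin d → ℕ) (α : ℝ) (γ : ℕ → ℝ) (M : ℝ) : ℝ :=
  ⨆ f : {f : (Fin d → ℝ) → ℂ // memCos d α γ f ∧ cosNormSq d α γ f ≤ 1},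
    approxErr d n z α γ M f.1
/-! ### Auxiliary material for the proof -/

section Aux

open MeasureTheory

/-- `c ^ nnz k` as a product of `ite`s. -/
lemma pow_nnz {M : Type*} [Zero M] [DecidableEq M] {d : ℕ} (k : Fin d → M) (c : ℝ) :
    c ^ nnz k = ∏ j, if k j = 0 then 1 else c := by
  classical
  rw [nnz, Nat.card_eq_fintype_card, Fintype.card_subtype, Finset.prod_ite]
  simp [Finset.prod_const]

/-- The basic tent-transform aliasing identity. -/
lemma cos_tent (m : ℕ) (u : ℝ) :
    Real.cos (π * m * tent (Int.fract u)) = Real.cos (2 * π * m * u) := by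
  have hfloor : (⌊u⌋ : ℝ) + Int.fract u = u := Int.floor_add_fract u
  have hrhs : Real.cos (2 * π * m * u) = Real.cos (2 * π * m * Int.fract u) := by
    conv_lhs => rw [← hfloor]
    rw [show 2 * π * (m : ℝ) * ((⌊u⌋ : ℝ) + Int.fract u)
        = 2 * π * m * Int.fract u + ((m * ⌊u⌋ : ℤ) : ℝ) * (2 * π) by push_cast; ring]
    exact Real.cos_add_int_mul_two_pi _ _
  rw [hrhs]
  set s := Int.fract u with hs
  rcases le_or_gt s (1 / 2) with h | h
  · have ht : tent s = 2 * s := by unfold tent; rw [abs_of_nonpos (by linarith)]; ring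
    rw [ht]; congr 1; ring
  · have ht : tent s = 2 - 2 * s := by unfold tent; rw [abs_of_nonneg (by linarith)]; ring
    rw [ht, show π * (m : ℝ) * (2 - 2 * s) = -(2 * π * m * s) + (m : ℤ) * (2 * π) by
        push_cast; ring,
      Real.cos_add_int_mul_two_pi, Real.cos_neg]

/-- The basic one-dimensional shift-averaging integral. -/
lemma integral_cos_mul_cos (m : ℕ) (hm : m ≠ 0) (a b : ℝ) :
    ∫ t in (0:ℝ)..1, Real.cos (2*π*m*(a+t)) * Real.cos (2*π*m*(b+t))
      = Real.cos (2*π*m*(a-b)) / 2 := by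
  have hXY : ∀ X Y : ℝ, Real.cos X * Real.cos Y = (Real.cos (X - Y) + Real.cos (X + Y)) / 2 := by
    intro X Y; rw [Real.cos_sub, Real.cos_add]; ring
  have h1 : ∀ t : ℝ, Real.cos (2*π*m*(a+t)) * Real.cos (2*π*m*(b+t))
      = (Real.cos (2*π*m*(a-b)) + Real.cos (4*π*m*t + 2*π*m*(a+b))) / 2 := by
    intro t
    rw [hXY, show 2*π*(m:ℝ)*(a+t) - 2*π*m*(b+t) = 2*π*m*(a-b) by ring,
      show 2*π*(m:ℝ)*(a+t) + 2*π*m*(b+t) = 4*π*m*t + 2*π*m*(a+b) by ring]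
  have hmpos : (0:ℝ) < m := by exact_mod_cast Nat.pos_of_ne_zero hm
  have hme : (4*π*(m:ℝ)) ≠ 0 := by positivity
  simp only [h1]
  rw [intervalIntegral.integral_div]
  rw [intervalIntegral.integral_add (intervalIntegrable_const)
    ((Continuous.intervalIntegrable (by continuity) _ _))]
  have h2 : ∫ t in (0:ℝ)..1, Real.cos (4*π*m*t + 2*π*m*(a+b)) = 0 := by
    rw [intervalIntegral.integral_comp_mul_add Real.cos hme (2*π*m*(a+b)),
      integral_cos,
      show 4*π*(m:ℝ)*1 + 2*π*m*(a+b) = 2*π*m*(a+b) + ((2*m : ℤ):ℝ) * (2*π) by push_cast; ring,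
      Real.sin_add_int_mul_two_pi,
      show 4*π*(m:ℝ)*0 + 2*π*m*(a+b) = 2*π*m*(a+b) by ring]
    simp
  rw [h2, intervalIntegral.integral_const]
  norm_num

/-- Membership of the cube, componentwise. -/
lemma mem_cube_iff {d : ℕ} {Δ : Fin d → ℝ} :
    Δ ∈ cube d ↔ ∀ j, Δ j ∈ Set.Icc (0:ℝ) 1 := by
  simp [cube, Set.mem_Icc, Pi.le_def, forall_and]

lemma measurableSet_cube (d : ℕ) : MeasurableSet (cube d) := by
  unfold cube; exact measurableSet_Icc

lemma isCompact_cube (d : ℕ) : IsCompact (cube d) := by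
  unfold cube; exact isCompact_Icc

lemma volume_cube (d : ℕ) : volume (cube d) = 1 := by
  unfold cube
  rw [show (Set.Icc (0:Fin d → ℝ) 1) = Set.Icc (fun _ => (0:ℝ)) (fun _ => 1) from rfl]
  rw [← Set.pi_univ_Icc, MeasureTheory.volume_pi_pi]
  simp

/-- Fubini on the unit cube for a product of one-variable functions. -/
lemma integral_cube_prod (d : ℕ) (F : Fin d → ℝ → ℝ) :
    ∫ Δ in cube d, ∏ j, F j (Δ j) = ∏ j, ∫ t in Set.Icc (0:ℝ) 1, F j t := by
  rw [← MeasureTheory.integral_indicator (measurableSet_cube d)]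
  have hind : ∀ Δ : Fin d → ℝ,
      (cube d).indicator (fun Δ => ∏ j, F j (Δ j)) Δ
        = ∏ j, (Set.Icc (0:ℝ) 1).indicator (F j) (Δ j) := by
    intro Δ
    by_cases h : Δ ∈ cube d
    · rw [Set.indicator_of_mem h]
      exact Finset.prod_congr rfl fun j _ => (Set.indicator_of_mem (mem_cube_iff.1 h j) _).symm
    · rw [Set.indicator_of_notMem h]
      obtain ⟨j, hj⟩ := not_forall.1 (fun hall => h (mem_cube_iff.2 hall))
      exact (Finset.prod_eq_zero (Finset.mem_univ j) (Set.indicator_of_notMem hj _)).symm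
  simp only [hind]
  rw [MeasureTheory.integral_fintype_prod_volume_eq_prod (ι := Fin d)
    (f := fun j t => (Set.Icc (0:ℝ) 1).indicator (F j) t)]
  exact Finset.prod_congr rfl fun j _ => MeasureTheory.integral_indicator measurableSet_Icc

/-- Summability of the one-dimensional weight sequence (natural index). -/
lemma summable_ite_nat (α c : ℝ) (h : 1 < 2*α) (hc : 0 ≤ c) :
    Summable (fun m : ℕ => if m = 0 then (1:ℝ) else c / (m:ℝ) ^ (2*α)) := by
  have hne : -(2*α) ≠ 0 := ne_of_lt (by linarith)
  have h1 : Summable (fun m : ℕ => c * (m:ℝ) ^ (-(2*α))) :=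
    (Real.summable_nat_rpow.mpr (by linarith)).mul_left c
  have h2 : Summable (fun m : ℕ => if m = 0 then (0:ℝ) else c / (m:ℝ)^(2*α)) := by
    refine Summable.of_nonneg_of_le (fun m => ?_) (fun m => ?_) h1
    · by_cases hm : m = 0 <;> simp only [hm, if_pos, if_neg, reduceIte] <;> positivity
    · by_cases hm : m = 0
      · simp [hm, Real.zero_rpow hne]
      · have hm' : (0:ℝ) < m := by exact_mod_cast Nat.pos_of_ne_zero hm
        simp only [hm, if_neg, reduceIte]
        rw [Real.rpow_neg hm'.le, div_eq_mul_inv]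
  have h3 : Summable (fun m : ℕ => if m = 0 then (1:ℝ) else 0) := (hasSum_ite_eq 0 1).summable
  refine (h3.add h2).congr fun m => ?_
  by_cases hm : m = 0 <;> simp [hm]

/-- Summability of the one-dimensional weight sequence (integer index). -/
lemma summable_ite_int (α c : ℝ) (h : 1 < 2*α) (hc : 0 ≤ c) :
    Summable (fun m : ℤ => if m = 0 then (1:ℝ) else c / |(m:ℝ)| ^ (2*α)) := by
  have hne : -(2*α) ≠ 0 := ne_of_lt (by linarith)
  have h1 : Summable (fun m : ℤ => c * |(m:ℝ)| ^ (-(2*α))) :=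
    (Real.summable_abs_int_rpow (by linarith)).mul_left c
  have h2 : Summable (fun m : ℤ => if m = 0 then (0:ℝ) else c / |(m:ℝ)|^(2*α)) := by
    refine Summable.of_nonneg_of_le (fun m => ?_) (fun m => ?_) h1
    · by_cases hm : m = 0 <;> simp only [hm, reduceIte, if_neg] <;> positivity
    · by_cases hm : m = 0
      · simp [hm, Real.zero_rpow hne]
      · have hm' : (0:ℝ) < |(m:ℝ)| := abs_pos.mpr (by exact_mod_cast hm)
        simp only [hm, if_neg, reduceIte]
        rw [Real.rpow_neg hm'.le, div_eq_mul_inv]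
  have h3 : Summable (fun m : ℤ => if m = 0 then (1:ℝ) else 0) := (hasSum_ite_eq 0 1).summable
  refine (h3.add h2).congr fun m => ?_
  by_cases hm : m = 0 <;> simp [hm]

end Aux
section PiTsum

/-- Product-type tsum factorization over `Fin d → ι`. -/
lemma pi_tsum_prod {𝕜 : Type*} [RCLike 𝕜] {ι : Type*} [Countable ι] :
    ∀ {d : ℕ} (f : Fin d → ι → 𝕜), (∀ j, Summable fun n => ‖f j n‖) →
      (Summable fun k : Fin d → ι => ‖∏ j, f j (k j)‖) ∧
      ∑' k : Fin d → ι, ∏ j, f j (k j) = ∏ j, ∑' n, f j n := by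
  intro d
  induction d with
  | zero =>
      intro f _
      constructor
      · exact (hasSum_fintype _).summable
      · rw [tsum_fintype]
        simp
  | succ d ih =>
      intro f hf
      obtain ⟨ihs, ihe⟩ := ih (fun j => f j.succ) (fun j => hf j.succ)
      obtain ⟨G, hG⟩ : ∃ G : (Fin d → ι) → 𝕜, G = fun k => ∏ j : Fin d, f j.succ (k j) :=
        ⟨_, rfl⟩
      have ihs' : Summable fun k : Fin d → ι => ‖G k‖ := by
        simp only [hG]; exact ihs
      have ihe' : ∑' k : Fin d → ι, G k = ∏ j : Fin d, ∑' n, f j.succ n := by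
        simp only [hG]; exact ihe
      set e : ι × (Fin d → ι) ≃ (Fin (d+1) → ι) := Fin.consEquiv (fun _ => ι)
      have key : ∀ p : ι × (Fin d → ι),
          ∏ j, f j (e p j) = f 0 p.1 * G p.2 := by
        intro p
        rw [Fin.prod_univ_succ, hG]
        simp [e, Fin.consEquiv]
      have hmulnorm : Summable fun p : ι × (Fin d → ι) => ‖f 0 p.1 * G p.2‖ :=
        (hf 0).mul_norm ihs'
      constructor
      · rw [← e.summable_iff]
        refine hmulnorm.congr fun p => ?_
        simp only [Function.comp_apply, key]
      · rw [← e.tsum_eq]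
        calc ∑' p : ι × (Fin d → ι), ∏ j, f j (e p j)
            = ∑' p : ι × (Fin d → ι), f 0 p.1 * G p.2 := tsum_congr key
          _ = (∑' n, f 0 n) * ∑' k : Fin d → ι, G k :=
              (tsum_mul_tsum_of_summable_norm (hf 0) ihs').symm
          _ = ∏ j, ∑' n, f j n := by rw [ihe', Fin.prod_univ_succ]

end PiTsum
section KernelAlg

/-- One-dimensional factor of the tent-transformed kernel summand. -/
def Fco (α g a b : ℝ) (m : ℕ) (δ : ℝ) : ℝ :=
  (if m = 0 then 1 else 2 * g / (m:ℝ) ^ (2*α)) *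
    (Real.cos (2*π*m*(a+δ)) * Real.cos (2*π*m*(b+δ)))

/-- One-dimensional factor of the averaged kernel (cosine form). -/
def Pl (α g t : ℝ) (m : ℕ) : ℝ :=
  if m = 0 then 1 else g * Real.cos (2*π*m*t) / (m:ℝ) ^ (2*α)

/-- One-dimensional factor of the averaged kernel (exponential form). -/
def Pr (α g t : ℝ) (m : ℤ) : ℂ :=
  ((if m = 0 then 1 else (g/2) / |(m:ℝ)| ^ (2*α) : ℝ) : ℂ) * Complex.exp (twoPiI * m * t)

/-- The kernel summand factorizes into one-dimensional pieces. -/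
lemma summand_eq (d : ℕ) (α : ℝ) (γ : ℕ → ℝ) (x y Δ : Fin d → ℝ) (k : Fin d → ℕ) :
    phi k (tentVec fun j => Int.fract (x j + Δ j)) *
        phi k (tentVec fun j => Int.fract (y j + Δ j)) / rW α γ (intCoe k)
      = ∏ j, Fco α (γ (j.1+1)) (x j) (y j) (k j) (Δ j) := by
  have hs : Real.sqrt 2 ^ nnz k * Real.sqrt 2 ^ nnz k
      = ∏ j, (if k j = 0 then (1:ℝ) else 2) := by
    rw [← mul_pow, Real.mul_self_sqrt (by norm_num), pow_nnz]
  unfold phi tentVec rW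
  rw [show
      (Real.sqrt 2 ^ nnz k * ∏ j, Real.cos (π * (k j) * tent (Int.fract (x j + Δ j)))) *
        (Real.sqrt 2 ^ nnz k * ∏ j, Real.cos (π * (k j) * tent (Int.fract (y j + Δ j))))
      = (Real.sqrt 2 ^ nnz k * Real.sqrt 2 ^ nnz k) *
          ((∏ j, Real.cos (π * (k j) * tent (Int.fract (x j + Δ j)))) *
            ∏ j, Real.cos (π * (k j) * tent (Int.fract (y j + Δ j)))) by ring, hs,
    ← Finset.prod_mul_distrib, ← Finset.prod_mul_distrib, ← Finset.prod_div_distrib]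
  refine Finset.prod_congr rfl fun j _ => ?_
  rw [cos_tent, cos_tent]
  by_cases h : k j = 0
  · simp [Fco, h, intCoe]
  · have h' : intCoe k j ≠ 0 := by simp [intCoe, h]
    have habs : |((intCoe k j : ℤ) : ℝ)| = ((k j : ℕ) : ℝ) := by
      simp [intCoe]
    rw [if_neg h, if_neg h', habs, Fco, if_neg h, div_div_eq_mul_div]
    ring

/-- The one-dimensional integral of `Fco` over the unit interval. -/
lemma Fco_setIntegral (α g a b : ℝ) (m : ℕ) :
    ∫ t in Set.Icc (0:ℝ) 1, Fco α g a b m t = Pl α g (a - b) m := by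
  by_cases h : m = 0
  · simp only [Fco, Pl, h, if_pos, reduceIte, Nat.cast_zero]
    norm_num
  · rw [MeasureTheory.integral_Icc_eq_integral_Ioc,
      ← intervalIntegral.integral_of_le (zero_le_one)]
    unfold Fco
    rw [intervalIntegral.integral_const_mul, integral_cos_mul_cos m h a b,
      Pl, if_neg h, if_neg h]
    ring

/-- Factorization of the Korobov-type coefficient. -/
lemma coeff_factor (d : ℕ) (α : ℝ) (γ : ℕ → ℝ) (k : Fin d → ℤ) :
    ((2:ℝ) ^ nnz k)⁻¹ / rW α γ k
      = ∏ j, (if k j = 0 then 1 else (γ (j.1+1)/2) / |(k j : ℝ)| ^ (2*α)) := by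
  rw [pow_nnz, rW, ← Finset.prod_inv_distrib, ← Finset.prod_div_distrib]
  refine Finset.prod_congr rfl fun j _ => ?_
  by_cases h : k j = 0
  · simp [h]
  · rw [if_neg h, if_neg h, if_neg h, div_div_eq_mul_div]
    rw [show ((2:ℝ))⁻¹ * γ (j.1+1) = γ (j.1+1) / 2 by ring]

/-- Halving the weights doubles the nonzero factors of `rW`. -/
lemma rW_half (d : ℕ) (α : ℝ) (γ : ℕ → ℝ) (k : Fin d → ℤ) :
    rW α (fun j => γ j / 2) k = 2 ^ nnz k * rW α γ k := by
  rw [pow_nnz, rW, rW, ← Finset.prod_mul_distrib]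
  refine Finset.prod_congr rfl fun j _ => ?_
  by_cases h : k j = 0
  · simp [h]
  · rw [if_neg h, if_neg h, if_neg h, div_div_eq_mul_div]
    ring

end KernelAlg
section PerCoord

lemma norm_Pr (α g t : ℝ) (hg : 0 ≤ g) (m : ℤ) :
    ‖Pr α g t m‖ = if m = 0 then 1 else (g/2) / |(m:ℝ)| ^ (2*α) := by
  have hz : twoPiI * m * t = ((2*π*m*t : ℝ) : ℂ) * Complex.I := by
    unfold twoPiI; push_cast; ring
  have habs : ‖Complex.exp (twoPiI * m * t)‖ = 1 := by
    rw [hz, Complex.norm_exp_ofReal_mul_I]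
  rw [Pr, norm_mul, habs, mul_one, Complex.norm_real, Real.norm_eq_abs, abs_of_nonneg]
  by_cases h : m = 0
  · simp [h]
  · rw [if_neg h]; positivity

lemma summable_norm_Pr (α g t : ℝ) (hα : 1 < 2*α) (hg : 0 ≤ g) :
    Summable fun m : ℤ => ‖Pr α g t m‖ := by
  refine (summable_ite_int α (g/2) hα (by positivity)).congr fun m => ?_
  rw [norm_Pr α g t hg]

lemma summable_norm_Pl (α g t : ℝ) (hα : 1 < 2*α) (hg : 0 ≤ g) :
    Summable fun m : ℕ => ‖((Pl α g t m : ℝ) : ℂ)‖ := by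
  refine Summable.of_nonneg_of_le (fun m => norm_nonneg _) (fun m => ?_)
    (summable_ite_nat α g hα hg)
  rw [Complex.norm_real, Real.norm_eq_abs, Pl]
  by_cases h : m = 0
  · simp [h]
  · rw [if_neg h, if_neg h, abs_div, abs_mul]
    have hm : (0:ℝ) < m := by exact_mod_cast Nat.pos_of_ne_zero h
    have hX : (0:ℝ) < (m:ℝ) ^ (2*α) := Real.rpow_pos_of_pos hm _
    rw [abs_of_nonneg hg, abs_of_nonneg hX.le]
    refine (div_le_div_iff_of_pos_right hX).mpr ?_
    calc g * |Real.cos (2*π*m*t)| ≤ g * 1 :=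
          mul_le_mul_of_nonneg_left (Real.abs_cos_le_one _) hg
      _ = g := mul_one g

lemma tsum_Pr_eq (α g t : ℝ) (hα : 1 < 2*α) (hg : 0 ≤ g) :
    ∑' m : ℤ, Pr α g t m = ∑' m : ℕ, ((Pl α g t m : ℝ) : ℂ) := by
  have hPr := summable_norm_Pr α g t hα hg
  have hPrS : Summable (Pr α g t) := hPr.of_norm
  have h₁ : Summable fun n : ℕ => Pr α g t n :=
    hPrS.comp_injective (fun a b h => by exact_mod_cast h)
  have h₂ : Summable fun n : ℕ => Pr α g t (-(n+1)) :=
    hPrS.comp_injective (fun a b h => by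
      simp only [neg_inj, add_left_inj] at h; exact_mod_cast h)
  have hPlS : Summable fun m : ℕ => ((Pl α g t m : ℝ) : ℂ) :=
    (summable_norm_Pl α g t hα hg).of_norm
  have hcomb : ∀ n : ℕ, Pr α g t ((n:ℤ)+1) + Pr α g t (-((n:ℤ)+1))
      = ((Pl α g t (n+1) : ℝ) : ℂ) := by
    intro n
    have hm : ((n:ℤ)+1) ≠ 0 := by positivity
    have hm' : (-((n:ℤ)+1)) ≠ 0 := neg_ne_zero.mpr hm
    have hn : (n+1 : ℕ) ≠ 0 := Nat.succ_ne_zero n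
    have hN : (0:ℝ) < (n:ℝ)+1 := by positivity
    have habs1 : |(((n:ℤ)+1 : ℤ):ℝ)| = (n:ℝ)+1 := by
      push_cast; rw [abs_of_nonneg hN.le]
    have habs2 : |((-((n:ℤ)+1) : ℤ):ℝ)| = (n:ℝ)+1 := by
      push_cast; rw [abs_neg, abs_of_nonneg hN.le]
    rw [Pr, Pr, Pl, if_neg hm, if_neg hm', if_neg hn, habs1, habs2]
    have hz1 : twoPiI * (((n:ℤ)+1 : ℤ):ℂ) * t
        = ((2*π*((n:ℝ)+1)*t : ℝ) : ℂ) * Complex.I := by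
      unfold twoPiI; push_cast; ring
    have hz2 : twoPiI * ((-((n:ℤ)+1) : ℤ):ℂ) * t
        = -((2*π*((n:ℝ)+1)*t : ℝ) : ℂ) * Complex.I := by
      unfold twoPiI; push_cast; ring
    rw [hz1, hz2, ← mul_add, ← Complex.two_cos, ← Complex.ofReal_cos]
    push_cast
    ring
  rw [tsum_of_nat_of_neg_add_one h₁ h₂, Summable.tsum_eq_zero_add h₁, Summable.tsum_eq_zero_add hPlS]
  have h0 : Pr α g t ((0:ℕ):ℤ) = ((Pl α g t 0 : ℝ) : ℂ) := by
    simp [Pr, Pl]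
  rw [h0, add_assoc]
  congr 1
  rw [← Summable.tsum_add ((summable_nat_add_iff 1).mpr h₁) h₂]
  refine tsum_congr fun n => ?_
  rw [show ((n+1:ℕ):ℤ) = (n:ℤ)+1 by push_cast; ring]
  exact hcomb n

end PerCoord
section MainChain

open MeasureTheory

/-- The shift-averaged tent-transformed kernel, computed as a real series. -/
lemma real_lhs (d : ℕ) (α : ℝ) (γ : ℕ → ℝ) (hα : 1 < 2*α)
    (hγpos : ∀ j : ℕ, 1 ≤ j → 0 < γ j) (x y : Fin d → ℝ) :
    ∫ Δ in cube d, cosKernel d α γ (tentVec fun j => Int.fract (x j + Δ j))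
        (tentVec fun j => Int.fract (y j + Δ j))
      = ∑' k : Fin d → ℕ, ∏ j, Pl α (γ (j.1+1)) (x j - y j) (k j) := by
  have hγ : ∀ j : Fin d, 0 < γ (j.1+1) := fun j => hγpos _ (Nat.le_add_left 1 j.1)
  have hker : ∀ Δ : Fin d → ℝ,
      cosKernel d α γ (tentVec fun j => Int.fract (x j + Δ j))
          (tentVec fun j => Int.fract (y j + Δ j))
        = ∑' k : Fin d → ℕ, ∏ j, Fco α (γ (j.1+1)) (x j) (y j) (k j) (Δ j) := by
    intro Δ
    rw [cosKernel]
    exact tsum_congr fun k => summand_eq d α γ x y Δ k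
  simp only [hker]
  -- local notation
  set B : Fin d → ℕ → ℝ := fun j m => if m = 0 then (1:ℝ) else 2*(γ (j.1+1))/(m:ℝ)^(2*α)
    with hB
  have hB_nonneg : ∀ j m, 0 ≤ B j m := by
    intro j m
    by_cases h : m = 0
    · simp [hB, h]
    · have hm : (0:ℝ) < m := by exact_mod_cast Nat.pos_of_ne_zero h
      have := (hγ j).le
      simp only [hB, if_neg h]
      positivity
  have hFco_bound : ∀ (j : Fin d) (m : ℕ) (δ : ℝ),
      |Fco α (γ (j.1+1)) (x j) (y j) m δ| ≤ B j m := by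
    intro j m δ
    have hcc : |Real.cos (2*π*m*(x j+δ)) * Real.cos (2*π*m*(y j+δ))| ≤ 1 := by
      rw [abs_mul]
      exact mul_le_one₀ (Real.abs_cos_le_one _) (abs_nonneg _) (Real.abs_cos_le_one _)
    have hcoef : |(if m = 0 then (1:ℝ) else 2*(γ (j.1+1))/(m:ℝ)^(2*α))| = B j m := by
      rw [hB, abs_of_nonneg]
      by_cases h : m = 0
      · simp [h]
      · have hm : (0:ℝ) < m := by exact_mod_cast Nat.pos_of_ne_zero h
        have := (hγ j).le
        simp only [if_neg h]
        positivity
    calc |Fco α (γ (j.1+1)) (x j) (y j) m δ|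
        = |(if m = 0 then (1:ℝ) else 2*(γ (j.1+1))/(m:ℝ)^(2*α))| *
            |Real.cos (2*π*m*(x j+δ)) * Real.cos (2*π*m*(y j+δ))| := by
          rw [Fco, abs_mul]
      _ ≤ |(if m = 0 then (1:ℝ) else 2*(γ (j.1+1))/(m:ℝ)^(2*α))| * 1 :=
          mul_le_mul_of_nonneg_left hcc (abs_nonneg _)
      _ = B j m := by rw [mul_one, hcoef]
  have hprod_bound : ∀ (k : Fin d → ℕ) (Δ : Fin d → ℝ),
      ‖∏ j, Fco α (γ (j.1+1)) (x j) (y j) (k j) (Δ j)‖ ≤ ∏ j, B j (k j) := by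
    intro k Δ
    rw [Real.norm_eq_abs, Finset.abs_prod]
    exact Finset.prod_le_prod (fun j _ => abs_nonneg _) (fun j _ => hFco_bound j (k j) (Δ j))
  have hcont : ∀ k : Fin d → ℕ,
      Continuous fun Δ : Fin d → ℝ => ∏ j, Fco α (γ (j.1+1)) (x j) (y j) (k j) (Δ j) := by
    intro k
    apply continuous_finset_prod
    intro j _
    unfold Fco
    fun_prop
  have hint : ∀ k : Fin d → ℕ,
      Integrable (fun Δ : Fin d → ℝ => ∏ j, Fco α (γ (j.1+1)) (x j) (y j) (k j) (Δ j))
        (volume.restrict (cube d)) :=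
    fun k => (hcont k).continuousOn.integrableOn_compact (isCompact_cube d)
  have hb_sum : Summable (fun k : Fin d → ℕ => ∏ j, B j (k j)) := by
    have hn : ∀ j : Fin d, Summable fun m : ℕ => ‖B j m‖ := by
      intro j
      refine (summable_ite_nat α (2*(γ (j.1+1))) hα (by have := (hγ j).le; positivity)).congr
        fun m => ?_
      rw [Real.norm_eq_abs, abs_of_nonneg (hB_nonneg j m)]
    exact ((pi_tsum_prod (𝕜 := ℝ) (fun j => B j) hn).1).of_norm
  have hnormint : ∀ k : Fin d → ℕ,
      (∫ Δ in cube d, ‖∏ j, Fco α (γ (j.1+1)) (x j) (y j) (k j) (Δ j)‖) ≤ ∏ j, B j (k j) := by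
    intro k
    have h1 : (∫ Δ in cube d, ‖∏ j, Fco α (γ (j.1+1)) (x j) (y j) (k j) (Δ j)‖)
        = ‖∫ Δ in cube d, ‖∏ j, Fco α (γ (j.1+1)) (x j) (y j) (k j) (Δ j)‖‖ :=
      (Real.norm_of_nonneg (integral_nonneg fun _ => norm_nonneg _)).symm
    rw [h1]
    have h2 := norm_setIntegral_le_of_norm_le_const
      (f := fun Δ : Fin d → ℝ => ‖∏ j, Fco α (γ (j.1+1)) (x j) (y j) (k j) (Δ j)‖)
      (by rw [volume_cube]; exact ENNReal.one_lt_top)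
      (fun Δ _ => by rw [norm_norm]; exact hprod_bound k Δ)
    rw [measureReal_def, volume_cube] at h2
    simpa using h2
  have hsum_int : Summable fun k : Fin d → ℕ =>
      ∫ Δ in cube d, ‖∏ j, Fco α (γ (j.1+1)) (x j) (y j) (k j) (Δ j)‖ :=
    Summable.of_nonneg_of_le (fun k => integral_nonneg fun _ => norm_nonneg _) hnormint hb_sum
  rw [← MeasureTheory.integral_tsum_of_summable_integral_norm hint hsum_int]
  refine tsum_congr fun k => ?_
  rw [integral_cube_prod d (fun j t => Fco α (γ (j.1+1)) (x j) (y j) (k j) t)]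
  exact Finset.prod_congr rfl fun j _ => Fco_setIntegral α (γ (j.1+1)) (x j) (y j) (k j)

/-- The product of the exponential-form one-dimensional factors. -/
lemma prod_Pr_eq (d : ℕ) (α : ℝ) (γ : ℕ → ℝ) (x y : Fin d → ℝ) (k : Fin d → ℤ) :
    ∏ j, Pr α (γ (j.1+1)) (x j - y j) (k j)
      = (((2:ℝ) ^ nnz k)⁻¹ / rW α γ k : ℝ) *
          Complex.exp (twoPiI * ∑ j, (k j : ℂ) * ((x j : ℂ) - (y j : ℂ))) := by
  unfold Pr
  rw [Finset.prod_mul_distrib, ← Complex.ofReal_prod, ← coeff_factor d α γ k]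
  congr 1
  rw [Finset.mul_sum, ← Complex.exp_sum]
  congr 1
  exact Finset.sum_congr rfl fun j _ => by push_cast; ring

end MainChain

/-- The shift-averaged tent-transformed cosine-space kernel equals
`Σ_{k∈ℤ^d} (2^{-|k|₀}/r_{α,γ}(k)) exp(2πi k·(x-y))`, which is the Korobov kernel with
weights `γ/2`. -/
theorem shift_averaged_tent_kernel (d : ℕ) (α : ℝ) (γ : ℕ → ℝ) (hα : 1 / 2 < α)
    (hγ1 : γ 1 ≤ 1) (hγdec : ∀ j : ℕ, 1 ≤ j → γ (j + 1) ≤ γ j)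
    (hγpos : ∀ j : ℕ, 1 ≤ j → 0 < γ j)
    (x y : Fin d → ℝ) (hx : x ∈ cube d) (hy : y ∈ cube d) :
    ((∫ Δ in cube d,
          cosKernel d α γ (tentVec fun j => Int.fract (x j + Δ j))
            (tentVec fun j => Int.fract (y j + Δ j)) : ℝ) : ℂ) =
        (∑' k : Fin d → ℤ,
          (((2 : ℝ) ^ nnz k)⁻¹ / rW α γ k : ℝ) *
            Complex.exp (twoPiI * ∑ j, (k j : ℂ) * ((x j : ℂ) - (y j : ℂ)))) ∧
      (∑' k : Fin d → ℤ,
          (((2 : ℝ) ^ nnz k)⁻¹ / rW α γ k : ℝ) *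
            Complex.exp (twoPiI * ∑ j, (k j : ℂ) * ((x j : ℂ) - (y j : ℂ)))) =
        korKernel d α (fun j => γ j / 2) x y := by
  have h2α : 1 < 2*α := by linarith
  have hγ : ∀ j : Fin d, 0 < γ (j.1+1) := fun j => hγpos _ (Nat.le_add_left 1 j.1)
  obtain ⟨hSl, hEl⟩ := pi_tsum_prod
    (fun j : Fin d => fun m : ℕ => ((Pl α (γ (j.1+1)) (x j - y j) m : ℝ) : ℂ))
    (fun j => summable_norm_Pl α _ _ h2α (hγ j).le)
  obtain ⟨hSr, hEr⟩ := pi_tsum_prod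
    (fun j : Fin d => fun m : ℤ => Pr α (γ (j.1+1)) (x j - y j) m)
    (fun j => summable_norm_Pr α _ _ h2α (hγ j).le)
  constructor
  · calc ((∫ Δ in cube d, cosKernel d α γ (tentVec fun j => Int.fract (x j + Δ j))
            (tentVec fun j => Int.fract (y j + Δ j)) : ℝ) : ℂ)
        = ((∑' k : Fin d → ℕ, ∏ j, Pl α (γ (j.1+1)) (x j - y j) (k j) : ℝ) : ℂ) := by
          rw [real_lhs d α γ h2α hγpos x y]
      _ = ∑' k : Fin d → ℕ, ((∏ j, Pl α (γ (j.1+1)) (x j - y j) (k j) : ℝ) : ℂ) :=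
          Complex.ofReal_tsum _
      _ = ∑' k : Fin d → ℕ, ∏ j, ((Pl α (γ (j.1+1)) (x j - y j) (k j) : ℝ) : ℂ) :=
          tsum_congr fun k => by rw [Complex.ofReal_prod]
      _ = ∏ j, ∑' m : ℕ, ((Pl α (γ (j.1+1)) (x j - y j) m : ℝ) : ℂ) := hEl
      _ = ∏ j, ∑' m : ℤ, Pr α (γ (j.1+1)) (x j - y j) m :=
          Finset.prod_congr rfl fun j _ => (tsum_Pr_eq α _ _ h2α (hγ j).le).symm
      _ = ∑' k : Fin d → ℤ, ∏ j, Pr α (γ (j.1+1)) (x j - y j) (k j) := hEr.symm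
      _ = ∑' k : Fin d → ℤ, (((2 : ℝ) ^ nnz k)⁻¹ / rW α γ k : ℝ) *
            Complex.exp (twoPiI * ∑ j, (k j : ℂ) * ((x j : ℂ) - (y j : ℂ))) :=
          tsum_congr fun k => prod_Pr_eq d α γ x y k
  · rw [korKernel]
    refine tsum_congr fun k => ?_
    rw [rW_half d α γ k]
    push_cast
    ring
end
end

section
/- Let d ∈ ℕ, α > 1/2, weights 1 ≥ γ₁ ≥ γ₂ ≥ ⋯ > 0, n ∈ ℕ, z ∈ {0,…,n−1}^d and M ≥ 1. Then Σ_{k ∈ H_M} Σ_{0 ≠ h ∈ Λ(z,n)^⊥} Σ_{σ ∈ {±1}^d} 2^{|k|₀} / (2^d r_{α,γ}(σ(h) + k)) = Σ_{k ∈ H̃_M} Σ_{0 ≠ h ∈ Λ(z,n)^⊥} 1 / r_{α,γ}(h + k); that is, the aliasing-error bound for the tent-transformed lattice algorithm over the positive-hyperoctant hyperbolic cross H_M equals the corresponding Korobov-space quantity over the full hyperbolic cross H̃_M. -/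
open MeasureTheory Finset
open scoped Real

noncomputable section

namespace AliasAux

/-- One-coordinate weight. -/
def W (α g : ℝ) (t : ℤ) : ℝ := if t = 0 then 1 else |(t : ℝ)| ^ (2 * α) / g

lemma rW_eq_W {d : ℕ} (α : ℝ) (γ : ℕ → ℝ) (k : Fin d → ℤ) :
    rW α γ k = ∏ j, W α (γ (j.1 + 1)) (k j) := rfl

lemma W_neg (α g : ℝ) (t : ℤ) : W α g (-t) = W α g t := by
  simp [W, neg_eq_zero]

lemma W_nonneg {α g : ℝ} (hg : 0 ≤ g) (t : ℤ) : 0 ≤ W α g t := by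
  unfold W
  split
  · norm_num
  · exact div_nonneg (Real.rpow_nonneg (abs_nonneg _) _) hg

lemma one_le_W {α g : ℝ} (hα : 0 ≤ α) (hg0 : 0 < g) (hg1 : g ≤ 1) (t : ℤ) :
    1 ≤ W α g t := by
  unfold W
  split
  · exact le_rfl
  · rename_i ht
    have h1 : (1 : ℝ) ≤ |(t : ℝ)| := by
      have := Int.one_le_abs ht
      exact_mod_cast this
    have h2 : (1 : ℝ) ≤ |(t : ℝ)| ^ (2 * α) := Real.one_le_rpow h1 (by positivity)
    calc (1:ℝ) ≤ |(t : ℝ)| ^ (2 * α) := h2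
      _ ≤ |(t : ℝ)| ^ (2 * α) / g :=
        le_div_self (Real.rpow_nonneg (abs_nonneg _) _) hg0 hg1

lemma gamma_le_one (γ : ℕ → ℝ) (hγ1 : γ 1 ≤ 1)
    (hγdec : ∀ j : ℕ, 1 ≤ j → γ (j + 1) ≤ γ j) :
    ∀ m : ℕ, 1 ≤ m → γ m ≤ 1 := by
  intro m
  induction m with
  | zero => intro h; omega
  | succ p ih =>
    intro _
    rcases Nat.eq_zero_or_pos p with hp | hp
    · subst hp; exact hγ1
    · exact le_trans (hγdec p hp) (ih hp)

lemma coord_bound {d : ℕ} {α M : ℝ} {γ : ℕ → ℝ} (hα : 1 / 2 < α) (hM : 1 ≤ M)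
    (hγ : ∀ j : ℕ, 1 ≤ j → 0 < γ j ∧ γ j ≤ 1)
    {k : Fin d → ℤ} (hk : rW α γ k ≤ M) (j : Fin d) : |(k j : ℝ)| ≤ M := by
  rcases eq_or_ne (k j) 0 with h0 | h0
  · rw [h0]
    simpa using le_trans zero_le_one hM
  · have hg := hγ (j.1 + 1) (by omega)
    have h1W : ∀ i : Fin d, 1 ≤ W α (γ (i.1 + 1)) (k i) := fun i =>
      one_le_W (by linarith) (hγ (i.1 + 1) (by omega)).1 (hγ (i.1 + 1) (by omega)).2 _
    have hW_le : W α (γ (j.1 + 1)) (k j) ≤ rW α γ k := by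
      rw [rW_eq_W, ← Finset.mul_prod_erase Finset.univ _ (Finset.mem_univ j)]
      have h1 : (1 : ℝ) ≤ ∏ i ∈ Finset.univ.erase j, W α (γ (i.1 + 1)) (k i) := by
        rw [← Finset.prod_const_one (s := Finset.univ.erase j)]
        exact Finset.prod_le_prod (fun i _ => zero_le_one) (fun i _ => h1W i)
      nth_rewrite 1 [← mul_one (W α (γ (j.1 + 1)) (k j))]
      exact mul_le_mul_of_nonneg_left h1 (le_trans zero_le_one (h1W j))
    have habs : (1 : ℝ) ≤ |(k j : ℝ)| := by
      have := Int.one_le_abs h0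
      exact_mod_cast this
    have h2 : |(k j : ℝ)| ≤ |(k j : ℝ)| ^ (2 * α) := by
      nth_rewrite 1 [← Real.rpow_one |(k j : ℝ)|]
      exact Real.rpow_le_rpow_of_exponent_le habs (by linarith)
    have h3 : |(k j : ℝ)| ^ (2 * α) ≤ W α (γ (j.1 + 1)) (k j) := by
      unfold W
      rw [if_neg h0]
      exact le_div_self (Real.rpow_nonneg (abs_nonneg _) _) hg.1 hg.2
    linarith

lemma finite_HZ {d : ℕ} {α M : ℝ} {γ : ℕ → ℝ} (hα : 1 / 2 < α) (hM : 1 ≤ M)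
    (hγ : ∀ j : ℕ, 1 ≤ j → 0 < γ j ∧ γ j ≤ 1) :
    {k : Fin d → ℤ | rW α γ k ≤ M}.Finite := by
  apply Set.Finite.subset (Set.Finite.pi' (fun j : Fin d => Set.finite_Icc (-⌈M⌉) ⌈M⌉))
  intro k hk
  simp only [Set.mem_setOf_eq] at hk ⊢
  intro j
  have h := coord_bound hα hM hγ hk j
  have h2 : |k j| ≤ ⌈M⌉ := by
    have h3 : |((k j : ℝ))| ≤ ((⌈M⌉ : ℤ) : ℝ) := le_trans h (Int.le_ceil M)
    exact_mod_cast h3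
  exact Set.mem_Icc.mpr (abs_le.mp h2)

lemma intCoe_inj {d : ℕ} : Function.Injective (intCoe (d := d)) := by
  intro a b hab
  funext j
  have := congrFun hab j
  simpa [intCoe] using this

lemma finite_HN {d : ℕ} {α M : ℝ} {γ : ℕ → ℝ} (hα : 1 / 2 < α) (hM : 1 ≤ M)
    (hγ : ∀ j : ℕ, 1 ≤ j → 0 < γ j ∧ γ j ≤ 1) :
    {k : Fin d → ℕ | rW α γ (intCoe k) ≤ M}.Finite := by
  have : {k : Fin d → ℕ | rW α γ (intCoe k) ≤ M}
      = intCoe ⁻¹' {k : Fin d → ℤ | rW α γ k ≤ M} := rfl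
  rw [this]
  exact Set.Finite.preimage (intCoe_inj.injOn) (finite_HZ hα hM hγ)

lemma summable_W_inv {α g : ℝ} (hα : 1 / 2 < α) (hg : 0 < g) :
    Summable fun t : ℤ => (W α g t)⁻¹ := by
  have h1 : Summable fun t : ℤ => (if t = 0 then (1 : ℝ) else 0) := by
    apply summable_of_ne_finset_zero (s := {(0 : ℤ)})
    intro t ht
    simp only [Finset.mem_singleton] at ht
    simp [ht]
  have h2 : Summable fun t : ℤ => g * |(t : ℝ)| ^ (-(2 * α)) :=
    (Real.summable_abs_int_rpow (by linarith)).mul_left g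
  apply (h1.add h2).congr
  intro t
  by_cases ht : t = 0
  · subst ht
    simp [W, Real.zero_rpow (show -(2 * α) ≠ 0 by intro h; nlinarith)]
  · simp only [W, ht, if_false, if_neg ht]
    rw [Real.rpow_neg (abs_nonneg _), zero_add]
    rw [div_eq_mul_inv, inv_eq_one_div, one_div, mul_inv, inv_inv, mul_comm]

set_option maxHeartbeats 1000000 in
lemma summable_pi_prod : ∀ {d : ℕ} (g : Fin d → ℤ → ℝ),
    (∀ j, Summable (g j)) → (∀ j t, 0 ≤ g j t) →
    Summable fun m : Fin d → ℤ => ∏ j, g j (m j) := by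
  intro d
  induction d with
  | zero =>
    intro g _ _
    haveI : Unique (Fin 0 → ℤ) := ⟨⟨fun j => j.elim0⟩, fun m => funext fun j => j.elim0⟩
    exact Summable.of_finite
  | succ d ih =>
    intro g hs hn
    have hnn1 : 0 ≤ g 0 := fun t => hn 0 t
    have hnn2 : (0 : (Fin d → ℤ) → ℝ) ≤ fun m : Fin d → ℤ => ∏ j, g j.succ (m j) :=
      fun m => Finset.prod_nonneg fun j _ => hn _ _
    have hsum2 : Summable fun m : Fin d → ℤ => ∏ j, g j.succ (m j) :=
      ih (fun j => g j.succ) (fun j => hs j.succ) (fun j t => hn j.succ t)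
    have key := Summable.mul_of_nonneg (hs 0) hsum2 hnn1 hnn2
    rw [← (Fin.consEquiv fun _ : Fin (d + 1) => ℤ).summable_iff]
    apply key.congr
    intro p
    simp [Function.comp, Fin.consEquiv, Fin.prod_univ_succ]

lemma summable_inv_rW {d : ℕ} {α : ℝ} {γ : ℕ → ℝ} (hα : 1 / 2 < α)
    (hγpos : ∀ j : ℕ, 1 ≤ j → 0 < γ j) :
    Summable fun m : Fin d → ℤ => 1 / rW α γ m := by
  have h := summable_pi_prod (fun (j : Fin d) (t : ℤ) => (W α (γ (j.1 + 1)) t)⁻¹)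
    (fun j => summable_W_inv hα (hγpos _ (by omega)))
    (fun j t => inv_nonneg.mpr (W_nonneg (hγpos _ (by omega)).le t))
  apply h.congr
  intro m
  rw [rW_eq_W, one_div, ← Finset.prod_inv_distrib]

lemma summable_inv_rW_shift {d : ℕ} {α : ℝ} {γ : ℕ → ℝ} (hα : 1 / 2 < α)
    (hγpos : ∀ j : ℕ, 1 ≤ j → 0 < γ j) (c : Fin d → ℤ) {P : (Fin d → ℤ) → Prop} :
    Summable fun h : {h : Fin d → ℤ // P h} => 1 / rW α γ (h.1 + c) := by
  have h1 : Summable fun m : Fin d → ℤ => 1 / rW α γ (m + c) := by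
    have := ((Equiv.addRight c).summable_iff
      (f := fun m : Fin d → ℤ => 1 / rW α γ m)).mpr (summable_inv_rW hα hγpos)
    apply this.congr
    intro m
    rfl
  exact h1.comp_injective Subtype.val_injective

/-- The fiber finset in one coordinate. -/
def Fset (m : ℕ) : Finset ℤ := if m = 0 then {0} else {(m : ℤ), -(m : ℤ)}

lemma natAbs_of_mem_Fset {m : ℕ} {t : ℤ} (ht : t ∈ Fset m) : t.natAbs = m := by
  unfold Fset at ht
  split at ht
  · rename_i h
    simp only [Finset.mem_singleton] at ht
    subst ht; simp [h]
  · rcases Finset.mem_insert.mp ht with h | h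
    · subst h; simp
    · rw [Finset.mem_singleton] at h
      subst h; simp

lemma mem_Fset_natAbs (t : ℤ) : t ∈ Fset t.natAbs := by
  unfold Fset
  rcases eq_or_ne t 0 with h | h
  · subst h; simp
  · rw [if_neg (by simpa using h)]
    rcases Int.natAbs_eq t with h1 | h1
    · exact Finset.mem_insert.mpr (Or.inl h1)
    · refine Finset.mem_insert.mpr (Or.inr (Finset.mem_singleton.mpr ?_))
      omega

lemma rW_natAbs {d : ℕ} (α : ℝ) (γ : ℕ → ℝ) (k : Fin d → ℤ) :
    rW α γ (fun j => ((k j).natAbs : ℤ)) = rW α γ k := by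
  unfold rW
  apply Finset.prod_congr rfl
  intro j _
  rcases eq_or_ne (k j) 0 with h | h
  · simp [h]
  · rw [if_neg (by simpa using h), if_neg h]
    have h2 : ((((k j).natAbs : ℤ) : ℝ)) = |((k j) : ℝ)| := by
      push_cast [Nat.cast_natAbs]
      try rfl
      try simp
    rw [h2, abs_abs]

lemma pow_nnz_eq {d : ℕ} (k : Fin d → ℕ) :
    (2 : ℝ) ^ nnz k = ∏ j, (if k j = 0 then (1 : ℝ) else 2) := by
  classical
  rw [Finset.prod_ite, Finset.prod_const, Finset.prod_const, one_pow, one_mul]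
  congr 1
  unfold nnz
  rw [Nat.card_eq_fintype_card, Fintype.card_subtype]

lemma two_div_two_mul (w : ℝ) : 2 / (2 * w) = 1 / w := by
  rcases eq_or_ne w 0 with h | h
  · simp [h]
  · field_simp

lemma coord_id {α g : ℝ} (kj : ℕ) (hj : ℤ) :
    (∑ b : Bool, (if kj = 0 then (1 : ℝ) else 2) /
        (2 * W α g ((if b then 1 else -1) * hj + (kj : ℤ))))
      = ∑ t ∈ Fset kj, 1 / W α g (hj + t) := by
  rw [Fintype.sum_bool]
  have hT : ((if (true : Bool) then (1 : ℤ) else -1) * hj + (kj : ℤ)) = hj + (kj : ℤ) := by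
    norm_num
  have hF : ((if (false : Bool) then (1 : ℤ) else -1) * hj + (kj : ℤ))
      = -(hj + -(kj : ℤ)) := by
    norm_num
    try ring
  rw [hT, hF, W_neg]
  rcases eq_or_ne kj 0 with h | h
  · subst h
    rw [if_pos rfl]
    rw [show Fset 0 = {0} from rfl, Finset.sum_singleton]
    simp only [Nat.cast_zero, add_zero, neg_zero]
    rw [← add_div, show (1 : ℝ) + 1 = 2 by norm_num, two_div_two_mul]
  · rw [if_neg h]
    rw [two_div_two_mul, two_div_two_mul]
    have hne : (kj : ℤ) ≠ -(kj : ℤ) := by omega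
    rw [show Fset kj = {(kj : ℤ), -(kj : ℤ)} from if_neg h, Finset.sum_pair hne]

lemma core_id {d : ℕ} (α : ℝ) (γ : ℕ → ℝ) (k : Fin d → ℕ) (h : Fin d → ℤ) :
    (∑ σ : Fin d → Bool, (2 : ℝ) ^ nnz k /
        (2 ^ d * rW α γ (fun j => sigApp σ h j + (k j : ℤ))))
      = ∑ k' ∈ Fintype.piFinset (fun j => Fset (k j)), 1 / rW α γ (h + k') := by
  classical
  have hσ : ∀ σ : Fin d → Bool,
      (2 : ℝ) ^ nnz k / (2 ^ d * rW α γ (fun j => sigApp σ h j + (k j : ℤ)))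
        = ∏ j, (if k j = 0 then (1 : ℝ) else 2) /
            (2 * W α (γ (j.1 + 1)) ((if σ j then 1 else -1) * h j + (k j : ℤ))) := by
    intro σ
    rw [Finset.prod_div_distrib, Finset.prod_mul_distrib, Finset.prod_const, ← pow_nnz_eq,
      Finset.card_univ, Fintype.card_fin, rW_eq_W]
    rfl
  calc (∑ σ : Fin d → Bool, (2 : ℝ) ^ nnz k /
        (2 ^ d * rW α γ (fun j => sigApp σ h j + (k j : ℤ))))
      = ∑ σ ∈ Fintype.piFinset (fun _ : Fin d => (Finset.univ : Finset Bool)),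
          ∏ j, (if k j = 0 then (1 : ℝ) else 2) /
            (2 * W α (γ (j.1 + 1)) ((if σ j then 1 else -1) * h j + (k j : ℤ))) := by
        rw [Fintype.piFinset_univ]
        exact Finset.sum_congr rfl fun σ _ => hσ σ
    _ = ∏ j, ∑ b ∈ (Finset.univ : Finset Bool),
          (if k j = 0 then (1 : ℝ) else 2) /
            (2 * W α (γ (j.1 + 1)) ((if b then 1 else -1) * h j + (k j : ℤ))) := by
        rw [Finset.prod_univ_sum]
    _ = ∏ j, ∑ t ∈ Fset (k j), 1 / W α (γ (j.1 + 1)) (h j + t) :=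
        Finset.prod_congr rfl fun j _ => coord_id (k j) (h j)
    _ = ∑ k' ∈ Fintype.piFinset (fun j => Fset (k j)),
          ∏ j, 1 / W α (γ (j.1 + 1)) (h j + k' j) := by
        rw [Finset.prod_univ_sum]
    _ = ∑ k' ∈ Fintype.piFinset (fun j => Fset (k j)), 1 / rW α γ (h + k') := by
        apply Finset.sum_congr rfl
        intro k' _
        rw [rW_eq_W, Finset.prod_div_distrib, Finset.prod_const_one]
        rfl

end AliasAux

/-- The aliasing-error bound over the positive-hyperoctant hyperbolic cross
`H_M` equals the corresponding Korobov-space quantity over the full hyperbolic cross `H̃_M`. -/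

theorem aliasing_bound_cosine_eq_korobov (d : ℕ) (α : ℝ) (γ : ℕ → ℝ) (hα : 1 / 2 < α)
    (hγ1 : γ 1 ≤ 1) (hγdec : ∀ j : ℕ, 1 ≤ j → γ (j + 1) ≤ γ j)
    (hγpos : ∀ j : ℕ, 1 ≤ j → 0 < γ j)
    (n : ℕ) (hn : 0 < n) (z : Fin d → ℕ) (hz : ∀ j, z j < n) (M : ℝ) (hM : 1 ≤ M) :
    (∑' k : {k : Fin d → ℕ // rW α γ (intCoe k) ≤ M},
        ∑' h : {h : Fin d → ℤ // h ≠ 0 ∧ inDual d n z h},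
          ∑ σ : Fin d → Bool,
            (2 : ℝ) ^ nnz k.1 /
              (2 ^ d * rW α γ (fun j => sigApp σ h.1 j + (k.1 j : ℤ)))) =
      ∑' k : {k : Fin d → ℤ // rW α γ k ≤ M},
        ∑' h : {h : Fin d → ℤ // h ≠ 0 ∧ inDual d n z h},
          1 / rW α γ (h.1 + k.1) := by
  classical
  have hγb : ∀ j : ℕ, 1 ≤ j → 0 < γ j ∧ γ j ≤ 1 := fun j hj =>
    ⟨hγpos j hj, AliasAux.gamma_le_one γ hγ1 hγdec j hj⟩
  have hfinZ := AliasAux.finite_HZ (d := d) (γ := γ) hα hM hγb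
  have hfinN := AliasAux.finite_HN (d := d) (γ := γ) hα hM hγb
  haveI : Fintype {k : Fin d → ℕ // rW α γ (intCoe k) ≤ M} := hfinN.fintype
  haveI : Fintype {k : Fin d → ℤ // rW α γ k ≤ M} := hfinZ.fintype
  rw [tsum_fintype, tsum_fintype]
  rw [← Finset.sum_subtype (p := fun k : Fin d → ℕ => rW α γ (intCoe k) ≤ M)
      hfinN.toFinset (fun x => hfinN.mem_toFinset)
      (fun a => ∑' h : {h : Fin d → ℤ // h ≠ 0 ∧ inDual d n z h}, ∑ σ : Fin d → Bool,
        (2 : ℝ) ^ nnz a / (2 ^ d * rW α γ (fun j => sigApp σ h.1 j + (a j : ℤ)))),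
    ← Finset.sum_subtype (p := fun k : Fin d → ℤ => rW α γ k ≤ M)
      hfinZ.toFinset (fun x => hfinZ.mem_toFinset)
      (fun a => ∑' h : {h : Fin d → ℤ // h ≠ 0 ∧ inDual d n z h}, 1 / rW α γ (h.1 + a))]
  have hHZ : hfinZ.toFinset = hfinN.toFinset.biUnion
      (fun a => Fintype.piFinset fun j => AliasAux.Fset (a j)) := by
    ext k'
    simp only [Set.Finite.mem_toFinset, Set.mem_setOf_eq, Finset.mem_biUnion,
      Fintype.mem_piFinset]
    constructor
    · intro hk'
      refine ⟨fun j => (k' j).natAbs, ?_, fun j => AliasAux.mem_Fset_natAbs (k' j)⟩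
      show rW α γ (intCoe fun j => (k' j).natAbs) ≤ M
      rw [show intCoe (fun j => (k' j).natAbs) = (fun j => (((k' j).natAbs : ℤ))) from rfl,
        AliasAux.rW_natAbs]
      exact hk'
    · rintro ⟨a, ha, hmem⟩
      have hab : ∀ j, ((k' j).natAbs) = a j := fun j => AliasAux.natAbs_of_mem_Fset (hmem j)
      have heq : rW α γ k' = rW α γ (intCoe a) := by
        rw [← AliasAux.rW_natAbs α γ k']
        congr 1
        funext j
        rw [hab j]; rfl
      rw [heq]; exact ha
  have hdisj : (hfinN.toFinset : Set (Fin d → ℕ)).PairwiseDisjoint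
      (fun a => Fintype.piFinset fun j => AliasAux.Fset (a j)) := by
    intro a _ b _ hab
    simp only [Function.onFun]
    rw [Finset.disjoint_left]
    intro x hxa hxb
    apply hab
    funext j
    rw [← AliasAux.natAbs_of_mem_Fset (Fintype.mem_piFinset.mp hxa j),
      AliasAux.natAbs_of_mem_Fset (Fintype.mem_piFinset.mp hxb j)]
  rw [hHZ, Finset.sum_biUnion hdisj]
  apply Finset.sum_congr rfl
  intro k _
  have hsum : ∀ k' ∈ Fintype.piFinset fun j => AliasAux.Fset (k j),
      Summable fun h : {h : Fin d → ℤ // h ≠ 0 ∧ inDual d n z h} =>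
        1 / rW α γ (h.1 + k') :=
    fun k' _ => AliasAux.summable_inv_rW_shift hα hγpos k'
  rw [← Summable.tsum_finsetSum hsum]
  apply tsum_congr
  intro h
  exact AliasAux.core_id α γ k h.1
end
end

section
/- Let d ∈ ℕ, α > 1/2, weights 1 ≥ γ₁ ≥ γ₂ ≥ ⋯ > 0 and M ≥ 1. For every q > 1/(2α), the cardinality of the full weighted hyperbolic cross satisfies |H̃_M| ≤ M^q ∏_{j=1}^d (1 + 2 ζ(2αq) γ_j^q), where ζ is the Riemann zeta function. -/
open MeasureTheory Finset
open scoped Real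

noncomputable section

section CardBound

private lemma summable_shift_rpow {x : ℝ} (hx : 1 < x) :
    Summable (fun k : ℕ => ((k : ℝ) + 1) ^ (-x)) := by
  have h : Summable (fun n : ℕ => (n : ℝ) ^ (-x)) :=
    Real.summable_nat_rpow.2 (by linarith)
  have := h.comp_injective Nat.succ_injective
  refine this.congr fun k => ?_
  simp [Function.comp, Nat.succ_eq_add_one]

private lemma realZeta_nonneg (x : ℝ) : 0 ≤ realZeta x :=
  tsum_nonneg fun k => Real.rpow_nonneg (by positivity) _

private lemma posSum_le_zeta {x : ℝ} (hx : 1 < x) (P : Finset ℤ) (hP : ∀ m ∈ P, 0 < m) :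
    ∑ m ∈ P, |(m : ℝ)| ^ (-x) ≤ realZeta x := by
  have hsum := summable_shift_rpow hx
  have hinj : Set.InjOn (fun m : ℤ => (m - 1).toNat) P := by
    intro a ha b hb hab
    have ha' := hP a ha; have hb' := hP b hb
    simp only at hab
    omega
  have himg : ∑ n ∈ P.image (fun m : ℤ => (m - 1).toNat), ((n : ℝ) + 1) ^ (-x)
      = ∑ m ∈ P, |(m : ℝ)| ^ (-x) := by
    rw [Finset.sum_image hinj]
    refine Finset.sum_congr rfl fun m hm => ?_
    have hm' := hP m hm
    have h1 : (((m - 1).toNat : ℤ) : ℝ) = (m : ℝ) - 1 := by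
      rw [Int.toNat_of_nonneg (by omega)]; push_cast; ring
    have h2 : |(m : ℝ)| = (m : ℝ) := abs_of_pos (by exact_mod_cast hm')
    rw [h2]
    push_cast at h1 ⊢
    rw [h1]; ring_nf
  rw [← himg]
  exact Summable.sum_le_tsum _ (fun i _ => Real.rpow_nonneg (by positivity) _) hsum

private lemma oneDim_sum_le {c x : ℝ} (hc : 0 ≤ c) (hx : 1 < x) (T : Finset ℤ) :
    ∑ m ∈ T, (if m = 0 then (1 : ℝ) else c * |(m : ℝ)| ^ (-x)) ≤ 1 + 2 * realZeta x * c := by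
  classical
  rw [← Finset.sum_filter_add_sum_filter_not T (· = 0)]
  have h1 : ∑ m ∈ T.filter (· = 0), (if m = 0 then (1 : ℝ) else c * |(m : ℝ)| ^ (-x)) ≤ 1 := by
    have hsub : T.filter (· = 0) ⊆ ({0} : Finset ℤ) := by
      intro m hm; simp only [Finset.mem_filter] at hm; simp [hm.2]
    calc ∑ m ∈ T.filter (· = 0), (if m = 0 then (1 : ℝ) else c * |(m : ℝ)| ^ (-x))
        = ∑ m ∈ T.filter (· = 0), (1 : ℝ) := by
          refine Finset.sum_congr rfl fun m hm => ?_
          simp only [Finset.mem_filter] at hm; simp [hm.2]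
      _ = (T.filter (· = 0)).card := by simp
      _ ≤ 1 := by
          have := Finset.card_le_card hsub
          simp only [Finset.card_singleton] at this
          exact_mod_cast this
  have h2 : ∑ m ∈ T.filter (¬ · = 0), (if m = 0 then (1 : ℝ) else c * |(m : ℝ)| ^ (-x))
      ≤ 2 * realZeta x * c := by
    have heq : ∑ m ∈ T.filter (¬ · = 0), (if m = 0 then (1 : ℝ) else c * |(m : ℝ)| ^ (-x))
        = c * ∑ m ∈ T.filter (¬ · = 0), |(m : ℝ)| ^ (-x) := by
      rw [Finset.mul_sum]
      refine Finset.sum_congr rfl fun m hm => ?_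
      simp only [Finset.mem_filter] at hm
      simp [hm.2]
    rw [heq]
    have hsplit : T.filter (¬ · = 0) = T.filter (0 < ·) ∪ T.filter (· < 0) := by
      ext m
      simp only [Finset.mem_filter, Finset.mem_union]
      constructor
      · rintro ⟨hm, h0⟩; rcases lt_or_gt_of_ne (Ne.symm h0) with h | h
        · exact Or.inl ⟨hm, h⟩
        · exact Or.inr ⟨hm, h⟩
      · rintro (⟨hm, h⟩ | ⟨hm, h⟩) <;> exact ⟨hm, by omega⟩
    have hdisj : Disjoint (T.filter (0 < ·)) (T.filter (· < 0)) := by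
      rw [Finset.disjoint_left]
      intro m hm1 hm2
      simp only [Finset.mem_filter] at hm1 hm2
      omega
    rw [hsplit, Finset.sum_union hdisj]
    have hpos : ∑ m ∈ T.filter (0 < ·), |(m : ℝ)| ^ (-x) ≤ realZeta x :=
      posSum_le_zeta hx _ (fun m hm => (Finset.mem_filter.1 hm).2)
    have hneg : ∑ m ∈ T.filter (· < 0), |(m : ℝ)| ^ (-x) ≤ realZeta x := by
      have himg : ∑ m ∈ (T.filter (· < 0)).image (fun m : ℤ => -m), |(m : ℝ)| ^ (-x)
          = ∑ m ∈ T.filter (· < 0), |(m : ℝ)| ^ (-x) := by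
        rw [Finset.sum_image (by intro a _ b _ h; exact neg_injective h)]
        refine Finset.sum_congr rfl fun m _ => ?_
        push_cast
        rw [abs_neg]
      rw [← himg]
      refine posSum_le_zeta hx _ (fun m hm => ?_)
      simp only [Finset.mem_image, Finset.mem_filter] at hm
      obtain ⟨a, ⟨_, ha⟩, rfl⟩ := hm
      omega
    calc c * (∑ m ∈ T.filter (0 < ·), |(m : ℝ)| ^ (-x) + ∑ m ∈ T.filter (· < 0), |(m : ℝ)| ^ (-x))
        ≤ c * (realZeta x + realZeta x) := by
          exact mul_le_mul_of_nonneg_left (add_le_add hpos hneg) hc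
      _ = 2 * realZeta x * c := by ring
  linarith

end CardBound

private def gAux (α : ℝ) (γ : ℕ → ℝ) (q : ℝ) (j : ℕ) (m : ℤ) : ℝ :=
  (if m = 0 then (1 : ℝ) else |(m : ℝ)| ^ (2 * α) / γ (j + 1)) ^ (-q)

/-- Cardinality bound for the full weighted hyperbolic cross:
`|H̃_M| ≤ M^q ∏_{j=1}^d (1 + 2ζ(2αq)γ_j^q)` for every `q > 1/(2α)`. -/
theorem hyperbolic_cross_card_bound (d : ℕ) (α : ℝ) (γ : ℕ → ℝ) (hα : 1 / 2 < α)
    (hγ1 : γ 1 ≤ 1) (hγdec : ∀ j : ℕ, 1 ≤ j → γ (j + 1) ≤ γ j)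
    (hγpos : ∀ j : ℕ, 1 ≤ j → 0 < γ j) (M : ℝ) (hM : 1 ≤ M) (q : ℝ) (hq : 1 / (2 * α) < q) :
    (Nat.card {k : Fin d → ℤ // rW α γ k ≤ M} : ℝ) ≤
      M ^ q * ∏ j : Fin d, (1 + 2 * realZeta (2 * α * q) * γ (j.1 + 1) ^ q) := by
  classical
  have hα0 : (0 : ℝ) < 2 * α := by linarith
  have hq0 : 0 < q := lt_trans (by positivity) hq
  have hx : 1 < 2 * α * q := by
    have h1 : 1 < q * (2 * α) := (div_lt_iff₀ hα0).mp hq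
    nlinarith
  set x := 2 * α * q with hxdef
  have hMq : (0 : ℝ) ≤ M ^ q := Real.rpow_nonneg (by linarith) q
  have hRHSfac : ∀ j : Fin d, 0 ≤ 1 + 2 * realZeta x * γ (j.1 + 1) ^ q := by
    intro j
    have h1 := realZeta_nonneg x
    have h2 : (0 : ℝ) < γ (j.1 + 1) := hγpos _ (by omega)
    have h3 : (0 : ℝ) ≤ γ (j.1 + 1) ^ q := Real.rpow_nonneg h2.le q
    positivity
  rcases finite_or_infinite {k : Fin d → ℤ // rW α γ k ≤ M} with hfin | hinf
  swap
  · rw [Nat.card_eq_zero_of_infinite]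
    push_cast
    exact mul_nonneg hMq (Finset.prod_nonneg fun j _ => hRHSfac j)
  · have hsfin : {k : Fin d → ℤ | rW α γ k ≤ M}.Finite := Set.finite_coe_iff.mp hfin
    set S := hsfin.toFinset with hSdef
    have hcard : (Nat.card {k : Fin d → ℤ // rW α γ k ≤ M} : ℝ) = S.card := by
      have h1 : Nat.card {k : Fin d → ℤ // rW α γ k ≤ M}
          = ({k : Fin d → ℤ | rW α γ k ≤ M} : Set _).ncard := Nat.card_coe_set_eq _
      rw [h1, Set.ncard_eq_toFinset_card _ hsfin]
    have hbase_pos : ∀ (k : Fin d → ℤ) (j : Fin d),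
        0 < (if k j = 0 then (1 : ℝ) else |((k j : ℤ) : ℝ)| ^ (2 * α) / γ (j.1 + 1)) := by
      intro k j
      split_ifs with h
      · norm_num
      · apply div_pos
        · apply Real.rpow_pos_of_pos
          rw [abs_pos]
          exact_mod_cast h
        · exact hγpos _ (by omega)
    have hgnn : ∀ (j : Fin d) (m : ℤ), 0 ≤ gAux α γ q j.1 m := by
      intro j m
      apply Real.rpow_nonneg
      split_ifs with h
      · norm_num
      · exact div_nonneg (Real.rpow_nonneg (abs_nonneg _) _) (hγpos _ (by omega)).le
    have hkey : ∀ k : Fin d → ℤ, rW α γ k ≤ M → 1 ≤ M ^ q * ∏ j, gAux α γ q j.1 (k j) := by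
      intro k hk
      have hrpos : 0 < rW α γ k := Finset.prod_pos fun j _ => hbase_pos k j
      have hprod : ∏ j, gAux α γ q j.1 (k j) = (rW α γ k) ^ (-q) := by
        unfold rW gAux
        exact Real.finset_prod_rpow _ _ (fun j _ => (hbase_pos k j).le) _
      rw [hprod]
      have h1 : rW α γ k ^ q ≤ M ^ q := Real.rpow_le_rpow hrpos.le hk hq0.le
      have h2 : rW α γ k ^ q * rW α γ k ^ (-q) = 1 := by
        rw [← Real.rpow_add hrpos]
        simp
      calc (1 : ℝ) = rW α γ k ^ q * rW α γ k ^ (-q) := h2.symm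
        _ ≤ M ^ q * rW α γ k ^ (-q) :=
            mul_le_mul_of_nonneg_right h1 (Real.rpow_nonneg hrpos.le _)
    have h1d : ∀ (j : Fin d) (T : Finset ℤ),
        ∑ m ∈ T, gAux α γ q j.1 m ≤ 1 + 2 * realZeta x * γ (j.1 + 1) ^ q := by
      intro j T
      have hγj : 0 < γ (j.1 + 1) := hγpos _ (by omega)
      have hrw : ∀ m : ℤ, gAux α γ q j.1 m
          = if m = 0 then (1 : ℝ) else γ (j.1 + 1) ^ q * |(m : ℝ)| ^ (-x) := by
        intro m
        by_cases h : m = 0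
        · simp [gAux, h]
        · simp only [gAux, h, if_false]
          rw [Real.div_rpow (Real.rpow_nonneg (abs_nonneg _) _) hγj.le,
            ← Real.rpow_mul (abs_nonneg _), Real.rpow_neg hγj.le]
          have hexp : (2 * α) * (-q) = -x := by rw [hxdef]; ring
          rw [hexp, div_eq_mul_inv, inv_inv, mul_comm]
      calc ∑ m ∈ T, gAux α γ q j.1 m
          = ∑ m ∈ T, (if m = 0 then (1 : ℝ) else γ (j.1 + 1) ^ q * |(m : ℝ)| ^ (-x)) :=
            Finset.sum_congr rfl fun m _ => hrw m
        _ ≤ 1 + 2 * realZeta x * γ (j.1 + 1) ^ q :=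
            oneDim_sum_le (Real.rpow_nonneg hγj.le q) hx _
    rw [hcard]
    have hSmem : ∀ k ∈ S, rW α γ k ≤ M := fun k hk => hsfin.mem_toFinset.mp hk
    set T : Fin d → Finset ℤ := fun j => S.image (fun k => k j) with hTdef
    calc (S.card : ℝ) = ∑ _k ∈ S, (1 : ℝ) := by simp
      _ ≤ ∑ k ∈ S, M ^ q * ∏ j, gAux α γ q j.1 (k j) :=
          Finset.sum_le_sum fun k hk => hkey k (hSmem k hk)
      _ = M ^ q * ∑ k ∈ S, ∏ j, gAux α γ q j.1 (k j) := by rw [Finset.mul_sum]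
      _ ≤ M ^ q * ∑ k ∈ Fintype.piFinset T, ∏ j, gAux α γ q j.1 (k j) := by
          refine mul_le_mul_of_nonneg_left ?_ hMq
          refine Finset.sum_le_sum_of_subset_of_nonneg ?_
            (fun k _ _ => Finset.prod_nonneg fun j _ => hgnn j _)
          intro k hk
          rw [Fintype.mem_piFinset]
          intro j
          exact Finset.mem_image_of_mem _ hk
      _ = M ^ q * ∏ j, ∑ m ∈ T j, gAux α γ q j.1 m := by rw [Finset.prod_univ_sum]
      _ ≤ M ^ q * ∏ j : Fin d, (1 + 2 * realZeta x * γ (j.1 + 1) ^ q) := by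
          refine mul_le_mul_of_nonneg_left ?_ hMq
          exact Finset.prod_le_prod (fun j _ => Finset.sum_nonneg fun m _ => hgnn j m)
            (fun j _ => h1d j (T j))
end
end

section
/- Let d ∈ ℕ, α > 1/2, weights 1 ≥ γ₁ ≥ γ₂ ≥ ⋯ > 0, n ∈ ℕ, z ∈ {0,…,n−1}^d, and let f ∈ C_{d,α,γ}. Then for every k ∈ ℤ₊^d and l ∈ ℤ₊^d, the tent-transformed lattice average of the product of basis functions satisfies (1/n) Σ_{i=1}^n φ_l(ψ(iz/n mod 1)) φ_k(ψ(iz/n mod 1)) = ((√2)^{|l|₀ + |k|₀} / 2^{2d}) Σ_{σ, σ′ ∈ {±1}^d} 1[σ(l) − σ′(k) ∈ Λ(z,n)^⊥]. -/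
open MeasureTheory Finset
open scoped Real

noncomputable section

noncomputable def eps (b : Bool) : ℝ := if b then 1 else -1

lemma cos_expand (θ : ℝ) :
    Complex.cos (θ : ℂ) = (∑ b : Bool, Complex.exp ((eps b * θ : ℝ) * Complex.I)) / 2 := by
  rw [Complex.cos]
  simp [eps, Fintype.sum_bool]

lemma prod_cos_expand {d : ℕ} (θ : Fin d → ℝ) :
    ((∏ j, Real.cos (θ j) : ℝ) : ℂ) =
      (∑ σ : Fin d → Bool, Complex.exp ((∑ j, eps (σ j) * θ j : ℝ) * Complex.I)) / 2 ^ d := by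
  push_cast
  simp only [cos_expand]
  rw [Finset.prod_div_distrib, Finset.prod_const, Finset.card_univ, Fintype.card_fin,
    Finset.prod_univ_sum]
  rw [Fintype.piFinset_univ]
  congr 1
  refine Finset.sum_congr rfl fun σ _ => ?_
  rw [← Complex.exp_sum]
  congr 1
  push_cast
  rw [Finset.sum_mul]

lemma char_sum (n : ℕ) (hn : 0 < n) (s : ℤ) :
    ∑ i ∈ Finset.Icc 1 n, Complex.exp ((i : ℂ) * ((s : ℂ) / n * (2 * Real.pi * Complex.I))) =
      if s % (n : ℤ) = 0 then (n : ℂ) else 0 := by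
  have hn0 : (n : ℂ) ≠ 0 := Nat.cast_ne_zero.mpr hn.ne'
  set ω : ℂ := Complex.exp ((s : ℂ) / n * (2 * Real.pi * Complex.I)) with hω
  have hexp : ∀ i : ℕ, Complex.exp ((i : ℂ) * ((s : ℂ) / n * (2 * Real.pi * Complex.I))) = ω ^ i := by
    intro i; rw [hω, ← Complex.exp_nat_mul]
  have hωn : ω ^ n = 1 := by
    rw [hω, ← Complex.exp_nat_mul]
    have : (n : ℂ) * ((s : ℂ) / n * (2 * Real.pi * Complex.I)) = (s : ℂ) * (2 * Real.pi * Complex.I) := by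
      rw [← mul_assoc, mul_div_cancel₀ _ hn0]
    rw [this, Complex.exp_int_mul_two_pi_mul_I s]
  simp only [hexp]
  by_cases hdvd : s % (n : ℤ) = 0
  · have : (n : ℤ) ∣ s := Int.dvd_of_emod_eq_zero hdvd
    obtain ⟨m, hm⟩ := this
    have hω1 : ω = 1 := by
      rw [hω]
      have : (s : ℂ) / n * (2 * Real.pi * Complex.I) = (m : ℂ) * (2 * Real.pi * Complex.I) := by
        congr 1
        rw [hm]; push_cast; rw [mul_comm, mul_div_cancel_right₀ _ hn0]
      rw [this, Complex.exp_int_mul_two_pi_mul_I m]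
    simp [hdvd, hω1]
  · have h2 : (2 * (Real.pi : ℂ) * Complex.I) ≠ 0 := by
      simp [Real.pi_ne_zero, Complex.I_ne_zero]
    have hω1 : ω ≠ 1 := by
      intro h
      rw [hω, Complex.exp_eq_one_iff] at h
      obtain ⟨m, hm⟩ := h
      have h3 : (s : ℂ) / n = (m : ℂ) := mul_right_cancel₀ h2 hm
      rw [div_eq_iff hn0] at h3
      have : s = m * n := by exact_mod_cast h3
      exact hdvd (by simp [this, Int.mul_emod_left])
    have hins : Finset.range (n + 1) = insert 0 (Finset.Icc 1 n) := by
      ext x; simp; omega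
    have h0 : (0 : ℕ) ∉ Finset.Icc 1 n := by simp
    have hsum : ∑ i ∈ Finset.range (n + 1), ω ^ i = 1 + ∑ i ∈ Finset.Icc 1 n, ω ^ i := by
      rw [hins, Finset.sum_insert h0, pow_zero]
    have hgeom : ∑ i ∈ Finset.range (n + 1), ω ^ i = 1 := by
      rw [geom_sum_eq hω1, pow_succ, hωn, one_mul]
      rw [div_self (sub_ne_zero.mpr hω1)]
    have hS : ∑ i ∈ Finset.Icc 1 n, ω ^ i = 0 := by
      have h := hsum.symm.trans hgeom
      linear_combination h
    rw [hS]
    simp [hdvd]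

lemma tent_cos (m : ℕ) (t : ℝ) (h0 : 0 ≤ t) (h1 : t ≤ 1) :
    Real.cos (π * m * tent t) = Real.cos (2 * π * m * t) := by
  rcases le_total t (1/2) with h | h
  · have : |2 * t - 1| = 1 - 2 * t := by rw [abs_of_nonpos (by linarith)]; ring
    rw [tent, this]
    ring_nf
  · have habs : |2 * t - 1| = 2 * t - 1 := abs_of_nonneg (by linarith)
    rw [tent, habs]
    have : π * m * (1 - (2 * t - 1)) = m * (2 * π) - 2 * π * m * t := by ring
    rw [this, Real.cos_nat_mul_two_pi_sub]

lemma fract_exp {d : ℕ} (n : ℕ) (hn : 0 < n) (h : Fin d → ℤ) (z : Fin d → ℕ) (i : ℕ) :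
    Complex.exp (((2 * π * ∑ j, (h j : ℝ) * Int.fract ((i : ℝ) * z j / n)) : ℝ) * Complex.I) =
      Complex.exp ((i : ℂ) * (((∑ j, h j * (z j : ℤ) : ℤ) : ℂ) / (n : ℂ) * (2 * π * Complex.I))) := by
  have hn0 : (n : ℝ) ≠ 0 := Nat.cast_ne_zero.mpr hn.ne'
  set m : ℤ := ∑ j, h j * ⌊(i : ℝ) * z j / n⌋ with hm
  have key : (2 * π * ∑ j, (h j : ℝ) * Int.fract ((i : ℝ) * z j / n) : ℝ) =
      2 * π * ((i : ℝ) * ((∑ j, h j * (z j : ℤ) : ℤ) : ℝ) / n) - (m : ℝ) * (2 * π) := by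
    have : ∀ j, (h j : ℝ) * Int.fract ((i : ℝ) * z j / n) =
        (h j : ℝ) * ((i : ℝ) * z j / n) - (h j : ℝ) * (⌊(i : ℝ) * z j / n⌋ : ℝ) := by
      intro j; rw [Int.fract]; ring
    rw [Finset.sum_congr rfl fun j _ => this j, Finset.sum_sub_distrib, hm]
    push_cast
    have hA : ∑ x, (h x : ℝ) * ((i : ℝ) * z x / n) = (i : ℝ) * (∑ x, (h x : ℝ) * z x) / n := by
      rw [Finset.mul_sum, Finset.sum_div]
      exact Finset.sum_congr rfl fun j _ => by field_simp
    rw [hA]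
    ring
  rw [key]
  push_cast
  rw [sub_mul, Complex.exp_sub]
  have : Complex.exp ((m : ℂ) * (2 * π) * Complex.I) = 1 := by
    rw [mul_assoc]; exact Complex.exp_int_mul_two_pi_mul_I m
  rw [this, div_one]
  congr 1
  field_simp

/-- The tent-transformed lattice average of a product of cosine basis
functions satisfies `(1/n) Σ_{i=1}^n φ_l(ψ(t_i)) φ_k(ψ(t_i)) =
((√2)^{|l|₀+|k|₀}/2^{2d}) Σ_{σ,σ'∈{±1}^d} 1[σ(l)-σ'(k) ∈ Λ(z,n)^⊥]`. -/
theorem tent_lattice_average_basis_product (d : ℕ) (α : ℝ) (γ : ℕ → ℝ) (hα : 1 / 2 < α)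
    (hγ1 : γ 1 ≤ 1) (hγdec : ∀ j : ℕ, 1 ≤ j → γ (j + 1) ≤ γ j)
    (hγpos : ∀ j : ℕ, 1 ≤ j → 0 < γ j)
    (n : ℕ) (hn : 0 < n) (z : Fin d → ℕ) (hz : ∀ j, z j < n)
    (f : (Fin d → ℝ) → ℂ) (hf : memCos d α γ f) (k l : Fin d → ℕ) :
    ((n : ℝ)⁻¹ * ∑ i ∈ Finset.Icc 1 n,
        phi l (tentVec (latPt d n z i)) * phi k (tentVec (latPt d n z i))) =
      Real.sqrt 2 ^ (nnz l + nnz k) / 2 ^ (2 * d) *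
        ∑ σ : Fin d → Bool, ∑ σ' : Fin d → Bool,
          if inDual d n z (fun j => sigApp σ (intCoe l) j - sigApp σ' (intCoe k) j)
          then (1 : ℝ) else 0 := by
  have hn0R : (n : ℝ) ≠ 0 := Nat.cast_ne_zero.mpr hn.ne'
  have hn0C : (n : ℂ) ≠ 0 := Nat.cast_ne_zero.mpr hn.ne'
  -- Step 1: peel off the tent transform
  have hphi : ∀ (m : Fin d → ℕ) (i : ℕ), phi m (tentVec (latPt d n z i)) =
      Real.sqrt 2 ^ nnz m * ∏ j, Real.cos (2 * π * m j * latPt d n z i j) := by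
    intro m i
    simp only [phi, tentVec, latPt]
    congr 1
    refine Finset.prod_congr rfl fun j _ => ?_
    exact tent_cos (m j) _ (Int.fract_nonneg _) (le_of_lt (Int.fract_lt_one _))
  -- abbreviations
  set Pl : ℕ → ℝ := fun i => ∏ j, Real.cos (2 * π * l j * latPt d n z i j) with hPl
  set Pk : ℕ → ℝ := fun i => ∏ j, Real.cos (2 * π * k j * latPt d n z i j) with hPk
  -- Step 2: reduce the goal to the core identity
  have key : (n : ℝ)⁻¹ * ∑ i ∈ Finset.Icc 1 n, Pl i * Pk i =
      (∑ σ : Fin d → Bool, ∑ σ' : Fin d → Bool,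
        if inDual d n z (fun j => sigApp σ (intCoe l) j - sigApp σ' (intCoe k) j)
        then (1 : ℝ) else 0) / 2 ^ (2 * d) := by
    -- per-point complex expansion
    have hiC : ∀ i : ℕ, ((Pl i : ℝ) : ℂ) * ((Pk i : ℝ) : ℂ) =
        (∑ σ : Fin d → Bool, ∑ σ' : Fin d → Bool,
          Complex.exp ((i : ℂ) *
            ((((∑ j, (sigApp σ (intCoe l) j - sigApp σ' (intCoe k) j) * (z j : ℤ)) : ℤ) : ℂ) / n *
              (2 * π * Complex.I)))) / 2 ^ (2 * d) := by
      intro i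
      have hk' : Pk i = ∏ j, Real.cos (-(2 * π * k j * latPt d n z i j)) := by
        simp only [hPk, Real.cos_neg]
      rw [hk']
      rw [show Pl i = ∏ j, Real.cos (2 * π * l j * latPt d n z i j) from rfl]
      rw [prod_cos_expand (fun j => 2 * π * l j * latPt d n z i j),
          prod_cos_expand (fun j => -(2 * π * k j * latPt d n z i j))]
      rw [div_mul_div_comm, ← pow_add, Finset.sum_mul_sum, show d + d = 2 * d by ring]
      congr 1
      refine Finset.sum_congr rfl fun σ _ => Finset.sum_congr rfl fun σ' _ => ?_
      rw [← Complex.exp_add, ← add_mul, ← Complex.ofReal_add]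
      have hab : ((∑ j, eps (σ j) * (2 * π * l j * latPt d n z i j)) +
          (∑ j, eps (σ' j) * (-(2 * π * k j * latPt d n z i j)))) =
          2 * π * ∑ j, ((sigApp σ (intCoe l) j - sigApp σ' (intCoe k) j : ℤ) : ℝ) *
            Int.fract ((i : ℝ) * z j / n) := by
        rw [← Finset.sum_add_distrib, Finset.mul_sum]
        refine Finset.sum_congr rfl fun j _ => ?_
        have hcast : ((sigApp σ (intCoe l) j - sigApp σ' (intCoe k) j : ℤ) : ℝ) =
            eps (σ j) * l j - eps (σ' j) * k j := by
          simp only [sigApp, intCoe, eps]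
          cases σ j <;> cases σ' j <;> push_cast <;> ring
        rw [hcast]
        simp only [latPt]
        ring
      rw [hab]
      exact fract_exp n hn _ z i
    apply Complex.ofReal_injective
    have step1 : ((((n : ℝ)⁻¹ * ∑ i ∈ Finset.Icc 1 n, Pl i * Pk i) : ℝ) : ℂ) =
        (n : ℂ)⁻¹ * ∑ i ∈ Finset.Icc 1 n, ((Pl i : ℝ) : ℂ) * ((Pk i : ℝ) : ℂ) := by
      push_cast; ring
    rw [step1, Finset.sum_congr rfl fun i _ => hiC i, ← Finset.sum_div]
    rw [Finset.sum_comm]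
    rw [Finset.sum_congr rfl fun σ (_ : σ ∈ (Finset.univ : Finset (Fin d → Bool))) =>
      (Finset.sum_comm : _ = ∑ σ' : Fin d → Bool, ∑ i ∈ Finset.Icc 1 n, _)]
    have hchar : ∀ σ σ' : Fin d → Bool,
        (∑ i ∈ Finset.Icc 1 n, Complex.exp ((i : ℂ) *
            ((((∑ j, (sigApp σ (intCoe l) j - sigApp σ' (intCoe k) j) * (z j : ℤ)) : ℤ) : ℂ) / n *
              (2 * π * Complex.I)))) =
          if inDual d n z (fun j => sigApp σ (intCoe l) j - sigApp σ' (intCoe k) j)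
          then (n : ℂ) else 0 := by
      intro σ σ'
      rw [char_sum n hn _]
      simp only [inDual]
    rw [Finset.sum_congr rfl fun σ _ => Finset.sum_congr rfl fun σ' _ => hchar σ σ']
    rw [← mul_div_assoc, Finset.mul_sum]
    rw [Finset.sum_congr rfl fun σ (_ : σ ∈ (Finset.univ : Finset (Fin d → Bool))) => Finset.mul_sum _ _ _]
    push_cast
    congr 1
    refine Finset.sum_congr rfl fun σ _ => Finset.sum_congr rfl fun σ' _ => ?_
    split_ifs with h
    · rw [inv_mul_cancel₀ hn0C]; norm_num
    · rw [mul_zero]; norm_num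
  calc ((n : ℝ)⁻¹ * ∑ i ∈ Finset.Icc 1 n,
        phi l (tentVec (latPt d n z i)) * phi k (tentVec (latPt d n z i)))
      = Real.sqrt 2 ^ (nnz l + nnz k) * ((n : ℝ)⁻¹ * ∑ i ∈ Finset.Icc 1 n, Pl i * Pk i) := by
        simp only [hphi]
        rw [Finset.sum_congr rfl fun i (_ : i ∈ Finset.Icc 1 n) =>
          (by ring : (Real.sqrt 2 ^ nnz l * Pl i) * (Real.sqrt 2 ^ nnz k * Pk i) =
            Real.sqrt 2 ^ nnz l * Real.sqrt 2 ^ nnz k * (Pl i * Pk i)),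
          ← Finset.mul_sum, pow_add]
        ring
    _ = _ := by rw [key]; ring
end
end
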